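/- Let ρ° be a solution of the DC power flow equations c_n e^{ρ_n} − Σ_m g_{nm} e^{(ρ_n+ρ_m)/2} − k_n e^{ρ_n/2} + p_n^o = 0 with ulu ≤ e^{ρ_n°} ≤ olu for all n. If max{p_n^o, 0} ≤ λ_min(G)·ulu for all n, then the Hessian of the energy function E at ρ° is positive semidefinite. -/

import Mathlib

open Finset Real

/-- The Hessian matrix of the DC energy function. -/
noncomputable def energyHessian {P : ℕ} (c k : Fin P → ℝ) (g : Fin P → Fin P → ℝ)
    (ρ : Fin P → ℝ) : Matrix (Fin P) (Fin P) ℝ :=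
  Matrix.of fun n m =>
    if n = m then
      Real.exp (ρ n / 2) * (c n * Real.exp (ρ n / 2) - k n / 2
        - ∑ l, g n l / 2 * Real.exp (ρ l / 2))
    else -(g n m / 2) * Real.exp ((ρ n + ρ m) / 2)

/-- The matrix G with G_nn = c_n and G_nm = −g_nm off the diagonal. -/
def gMat {P : ℕ} (c : Fin P → ℝ) (g : Fin P → Fin P → ℝ) : Matrix (Fin P) (Fin P) ℝ :=
  Matrix.of fun n m => if n = m then c n else -(g n m)

open Matrix in
/-- Nonnegative scalar multiples of PSD real matrices are PSD. -/
lemma posSemidef_smul' {P : ℕ} {A : Matrix (Fin P) (Fin P) ℝ} (hA : A.PosSemidef)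
    {t : ℝ} (ht : 0 ≤ t) : (t • A).PosSemidef := by
  refine ⟨?_, fun x => ?_⟩
  · unfold Matrix.IsHermitian
    rw [Matrix.conjTranspose_smul, hA.1.eq]
    simp
  · have hsum : (x.sum fun i xi => x.sum fun j xj => star xi * (t • A) i j * xj)
        = t * (x.sum fun i xi => x.sum fun j xj => star xi * A i j * xj) := by
      simp only [Finsupp.sum, Finset.mul_sum, Matrix.smul_apply, smul_eq_mul]
      exact Finset.sum_congr rfl fun i _ => Finset.sum_congr rfl fun j _ => by ring
    rw [hsum]
    exact mul_nonneg ht (hA.2 x)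

open Matrix in
/-- A Hermitian matrix minus its least eigenvalue times the identity is PSD. -/
lemma posSemidef_sub_inf_eigenvalues {P : ℕ} {A : Matrix (Fin P) (Fin P) ℝ}
    (hA : A.IsHermitian) :
    (A - (⨅ i, hA.eigenvalues i) • (1 : Matrix (Fin P) (Fin P) ℝ)).PosSemidef := by
  set lam := ⨅ i, hA.eigenvalues i with hlam
  set U : Matrix (Fin P) (Fin P) ℝ := (hA.eigenvectorUnitary : Matrix (Fin P) (Fin P) ℝ)
    with hUdef
  have hUU : U * star U = 1 := (Matrix.mem_unitaryGroup_iff).mp hA.eigenvectorUnitary.2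
  have hspec : A = U * Matrix.diagonal (RCLike.ofReal ∘ hA.eigenvalues) * star U :=
    hA.spectral_theorem
  have hdiagsub : Matrix.diagonal (fun i => hA.eigenvalues i - lam)
      = Matrix.diagonal (RCLike.ofReal ∘ hA.eigenvalues) - lam • (1 : Matrix (Fin P) (Fin P) ℝ) := by
    ext i j
    by_cases hij : i = j
    · subst hij
      simp [Matrix.diagonal_apply_eq, Matrix.one_apply_eq, RCLike.ofReal]
    · simp [Matrix.diagonal_apply_ne _ hij, Matrix.one_apply_ne hij]
  have key : A - lam • (1 : Matrix (Fin P) (Fin P) ℝ)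
      = U * Matrix.diagonal (fun i => hA.eigenvalues i - lam) * Uᴴ := by
    have hstar : Uᴴ = star U := rfl
    rw [hstar, hdiagsub, Matrix.mul_sub, Matrix.sub_mul, mul_smul_comm, mul_one,
      smul_mul_assoc, hUU, ← hspec]
  rw [key]
  apply Matrix.PosSemidef.mul_mul_conjTranspose_same
  refine Matrix.posSemidef_diagonal_iff.mpr fun i => ?_
  have : lam ≤ hA.eigenvalues i := ciInf_le (Finite.bddBelow_range _) i
  linarith

open Matrix

/-- At any power flow solution ρ° in the voltage box, if max{p_n^o, 0} ≤ λ_min(G)·ulu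
for all n, then the Hessian of the energy function at ρ° is positive semidefinite. -/
theorem energy_convex_at_solution {P : ℕ} (ulu olu : ℝ)
    (c k p : Fin P → ℝ) (g : Fin P → Fin P → ℝ)
    (h0 : 0 < ulu) (h1 : ulu ≤ olu)
    (hsym : ∀ n m, g n m = g m n) (hdiag : ∀ n, g n n = 0)
    (hg : ∀ n m, 0 ≤ g n m) (hc : ∀ n, 0 < c n)
    (hG : (gMat c g).IsHermitian) (hGpd : (gMat c g).PosDef)
    (ρ0 : Fin P → ℝ)
    (hsol : ∀ n, c n * Real.exp (ρ0 n) - (∑ m, g n m * Real.exp ((ρ0 n + ρ0 m) / 2))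
        - k n * Real.exp (ρ0 n / 2) + p n = 0)
    (hbox : ∀ n, ulu ≤ Real.exp (ρ0 n) ∧ Real.exp (ρ0 n) ≤ olu)
    (hcond : ∀ n, max (p n) 0 ≤ (⨅ i, hG.eigenvalues i) * ulu) :
    (energyHessian c k g ρ0).PosSemidef := by
  set lam := ⨅ i, hG.eigenvalues i with hlam
  set u : Fin P → ℝ := fun n => Real.exp (ρ0 n / 2) with hu
  set D : Matrix (Fin P) (Fin P) ℝ := Matrix.diagonal u with hD
  set M : Matrix (Fin P) (Fin P) ℝ :=
    (gMat c g - lam • 1) + Matrix.diagonal (fun n => lam - p n / Real.exp (ρ0 n)) with hM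
  -- basic facts
  have hue : ∀ n, u n * u n = Real.exp (ρ0 n) := by
    intro n; rw [hu, ← Real.exp_add]; ring_nf
  have hupos : ∀ n, 0 < u n := fun n => Real.exp_pos _
  have hlamnn : 0 ≤ lam := by
    rcases isEmpty_or_nonempty (Fin P) with h | h
    · have : lam = 0 := by
        rw [hlam, Real.iInf_of_isEmpty]
      linarith
    · obtain ⟨n⟩ := h
      have := hcond n
      have h2 : (0:ℝ) ≤ max (p n) 0 := le_max_right _ _
      nlinarith
  -- the key decomposition
  have hDH : Dᴴ = D := by
    rw [hD, Matrix.diagonal_conjTranspose]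
    congr 1
  have hdecomp : energyHessian c k g ρ0 = (1/2 : ℝ) • (D * M * D) := by
    ext n m
    have hDMD : (D * M * D) n m = u n * M n m * u m := by
      rw [hD, Matrix.mul_diagonal, Matrix.diagonal_mul]
    by_cases hnm : n = m
    · subst hnm
      have hM_nn : M n n = c n - p n / Real.exp (ρ0 n) := by
        simp [hM, gMat, Matrix.sub_apply, Matrix.smul_apply, Matrix.one_apply_eq,
          Matrix.diagonal_apply_eq]
      have hsoln := hsol n
      have hsum : (∑ m', g n m' * Real.exp ((ρ0 n + ρ0 m') / 2))
          = 2 * u n * ∑ l, g n l / 2 * u l := by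
        rw [Finset.mul_sum]
        refine Finset.sum_congr rfl fun l _ => ?_
        rw [hu]
        rw [show (ρ0 n + ρ0 l) / 2 = ρ0 n / 2 + ρ0 l / 2 by ring, Real.exp_add]
        ring
      rw [hsum] at hsoln
      have hexp : Real.exp (ρ0 n) = u n * u n := (hue n).symm
      rw [hexp] at hsoln
      simp only [energyHessian, Matrix.of_apply, if_pos rfl, Matrix.smul_apply, smul_eq_mul,
        hDMD, hM_nn]
      have hune : u n ≠ 0 := ne_of_gt (hupos n)
      rw [hexp]
      field_simp
      simp only [hu] at hsoln
      have hS : (∑ x, g n x * Real.exp (ρ0 x / 2) / 2) = ∑ l, g n l / 2 * Real.exp (ρ0 l / 2) :=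
        Finset.sum_congr rfl (fun l _ => by ring)
      rw [hS]
      rw [if_pos trivial]
      linear_combination hsoln
    · have hM_nm : M n m = -(g n m) := by
        simp [hM, gMat, Matrix.sub_apply, Matrix.smul_apply, Matrix.one_apply_ne hnm,
          Matrix.diagonal_apply_ne _ hnm, hnm]
      simp only [energyHessian, Matrix.of_apply, if_neg hnm, Matrix.smul_apply, smul_eq_mul,
        hDMD, hM_nm]
      rw [show (ρ0 n + ρ0 m) / 2 = ρ0 n / 2 + ρ0 m / 2 by ring, Real.exp_add, hu]
      ring
  have hMpsd : M.PosSemidef := by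
    apply Matrix.PosSemidef.add (posSemidef_sub_inf_eigenvalues hG)
    refine Matrix.posSemidef_diagonal_iff.mpr fun n => ?_
    have hbn := (hbox n).1
    have hen : (0:ℝ) < Real.exp (ρ0 n) := Real.exp_pos _
    have h2 : p n / Real.exp (ρ0 n) ≤ lam := by
      have hp : p n ≤ lam * ulu := le_trans (le_max_left _ _) (hcond n)
      calc p n / Real.exp (ρ0 n) ≤ lam * ulu / Real.exp (ρ0 n) := by gcongr
        _ ≤ lam * ulu / ulu := by
            apply div_le_div_of_nonneg_left (by positivity) h0 hbn
        _ = lam := by field_simp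
    linarith
  have hpsd : (D * M * Dᴴ).PosSemidef := hMpsd.mul_mul_conjTranspose_same D
  rw [hDH] at hpsd
  rw [hdecomp]
  exact posSemidef_smul' hpsd (by norm_num)
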